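/- Let n ≥ 3. If ψ : (0,∞) → ℝ is a C² function with ∫₀^∞ (ψ(r)² + ψ′(r)²) dr < ∞ that satisfies the ordinary differential equation −ψ″(r) − ((n−1)/r)ψ′(r) + (r² + (n−1)/r² − n − 2)ψ(r) = 0 for all r > 0, then there exists c ∈ ℝ such that ψ(r) = c · r·exp(−r²/2) for all r > 0; that is, the H¹(ℝ₊) solutions of A₁(ψ) = 0 are exactly the multiples of 𝔤′(r) = −r·exp(−r²/2), where 𝔤(r) = exp(−r²/2). -/

import Mathlib

open MeasureTheory Real Filter Set

lemma hE' (r : ℝ) : HasDerivAt (fun r : ℝ => Real.exp (-r^2/2)) (-r * Real.exp (-r^2/2)) r := by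
  have h1 : HasDerivAt (fun r : ℝ => -r^2/2) (-r) r := by
    have := ((hasDerivAt_pow 2 r).neg).div_const 2
    simpa using this.congr_deriv (by ring)
  simpa [mul_comm] using h1.exp

lemma hphi (r : ℝ) : HasDerivAt (fun r : ℝ => r * Real.exp (-r^2/2))
    ((1 - r^2) * Real.exp (-r^2/2)) r := by
  have := (hasDerivAt_id r).fun_mul (hE' r)
  refine this.congr_deriv ?_
  simp only [id_eq]
  ring

lemma hphi' (r : ℝ) : HasDerivAt (fun r : ℝ => (1 - r^2) * Real.exp (-r^2/2))
    ((r^3 - 3*r) * Real.exp (-r^2/2)) r := by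
  have h1 : HasDerivAt (fun r : ℝ => 1 - r^2) (-(2*r)) r := by
    have := (hasDerivAt_pow 2 r).const_sub 1
    simpa using this
  have := h1.fun_mul (hE' r)
  refine this.congr_deriv ?_
  ring

lemma const_on_Ioi {f : ℝ → ℝ} (hf : ∀ x ∈ Ioi (0:ℝ), HasDerivAt f 0 x)
    {a b : ℝ} (ha : 0 < a) (hb : 0 < b) : f a = f b := by
  wlog hab : a ≤ b generalizing a b
  · exact (this hb ha (le_of_not_ge hab)).symm
  have hcont : ContinuousOn f (Icc a b) := fun x hx =>
    (hf x (lt_of_lt_of_le ha hx.1)).continuousAt.continuousWithinAt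
  have := constant_of_has_deriv_right_zero hcont (fun x hx =>
    (hf x (lt_of_lt_of_le ha hx.1)).hasDerivWithinAt) b (right_mem_Icc.2 hab)
  exact this.symm


/-- Claim 2 in the proof of nondegeneracy: for `k = 1` (`λ₁ = n − 1`), the `H¹(ℝ₊)`
solutions of `−ψ″ − ((n−1)/r)ψ′ + (r² + (n−1)/r² − n − 2)ψ = 0` are exactly the multiples
of `𝔤′(r) = −r exp(−r²/2)`. -/
theorem radial_mode_one (n : ℕ) (hn : 3 ≤ n)
    (ψ ψ' ψ'' : ℝ → ℝ)
    (hd1 : ∀ r ∈ Ioi (0 : ℝ), HasDerivAt ψ (ψ' r) r)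
    (hd2 : ∀ r ∈ Ioi (0 : ℝ), HasDerivAt ψ' (ψ'' r) r)
    (hc2 : ContinuousOn ψ'' (Ioi (0 : ℝ)))
    (hint : IntegrableOn (fun r => (ψ r) ^ 2 + (ψ' r) ^ 2) (Ioi (0 : ℝ)))
    (hode : ∀ r ∈ Ioi (0 : ℝ),
      -(ψ'' r) - ((n - 1) / r) * ψ' r + (r ^ 2 + (n - 1) / r ^ 2 - n - 2) * ψ r = 0) :
    ∃ c : ℝ, ∀ r ∈ Ioi (0 : ℝ), ψ r = c * (r * Real.exp (-r ^ 2 / 2)) := by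
  set φ : ℝ → ℝ := fun r => r * Real.exp (-r^2/2) with hφdef
  set φd : ℝ → ℝ := fun r => (1 - r^2) * Real.exp (-r^2/2) with hφddef
  set W : ℝ → ℝ := fun r => ψ' r * φ r - ψ r * φd r with hWdef
  set g : ℝ → ℝ := fun r => r^(n-1) * W r with hgdef
  have hφpos : ∀ r : ℝ, 0 < r → 0 < φ r := fun r hr =>
    mul_pos hr (Real.exp_pos _)
  -- g has zero derivative on Ioi 0
  have hg0 : ∀ r ∈ Ioi (0:ℝ), HasDerivAt g 0 r := by
    intro r hr
    have hr0 : (0:ℝ) < r := hr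
    have hrne : r ≠ 0 := ne_of_gt hr0
    have hW : HasDerivAt W (ψ'' r * φ r - ψ r * ((r^3 - 3*r) * Real.exp (-r^2/2))) r := by
      have h1 := (hd2 r hr).fun_mul (hphi r)
      have h2 := (hd1 r hr).fun_mul (hphi' r)
      have := h1.fun_sub h2
      refine this.congr_deriv ?_
      simp only [hφdef, hφddef]
      ring
    have hpow : HasDerivAt (fun x : ℝ => x^(n-1)) ((n-1 : ℕ) * r^(n-2)) r := by
      have := hasDerivAt_pow (n-1) r
      have h : n-1-1 = n-2 := by omega
      rwa [h] at this
    have := hpow.fun_mul hW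
    refine this.congr_deriv ?_
    have hψ'' : ψ'' r = (r^2 + ((n:ℝ)-1)/r^2 - n - 2) * ψ r - ((n:ℝ)-1)/r * ψ' r := by
      have := hode r hr
      push_cast at this ⊢
      linarith
    have hcast : ((n-1 : ℕ) : ℝ) = (n:ℝ) - 1 := by
      push_cast [Nat.cast_sub (by omega : 1 ≤ n)]; ring
    have hpowsplit : r^(n-1) = r^(n-2) * r := by
      rw [← pow_succ]
      congr 1
      omega
    simp only [hWdef, hφdef, hφddef, hcast, hψ'', hpowsplit]
    have hEne : Real.exp (-r^2/2) ≠ 0 := Real.exp_ne_zero _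
    field_simp
    ring
  -- g is constant
  have hgconst : ∀ r ∈ Ioi (0:ℝ), g r = g 1 := fun r hr =>
    const_on_Ioi hg0 hr one_pos
  set h : ℝ → ℝ := fun r => ψ r / φ r with hhdef
  have hhd : ∀ r ∈ Ioi (0:ℝ), HasDerivAt h (W r / (φ r)^2) r := by
    intro r hr
    exact (hd1 r hr).div (hphi r) (ne_of_gt (hφpos r hr))
  have hψeq : ∀ r ∈ Ioi (0:ℝ), ψ r = h r * φ r := by
    intro r hr
    simp only [hhdef]
    field_simp [ne_of_gt (hφpos r hr)]
  by_cases hc0 : g 1 = 0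
  · -- W vanishes, h is constant
    have hW0 : ∀ r ∈ Ioi (0:ℝ), W r = 0 := by
      intro r hr
      have := hgconst r hr
      rw [hc0] at this
      have hrpow : r^(n-1) ≠ 0 := pow_ne_zero _ (ne_of_gt hr)
      simpa only [hgdef, mul_eq_zero, hrpow, false_or] using this
    refine ⟨h 1, fun r hr => ?_⟩
    have : h r = h 1 := const_on_Ioi (fun x hx => by
      have := hhd x hx
      rwa [hW0 x hx, zero_div] at this) hr one_pos
    rw [hψeq r hr, this]
  · -- contradiction case
    exfalso
    set G : ℝ → ℝ := fun s => Real.exp (s^2) / s^(n+1) with hGdef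
    have hrpow : ∀ r : ℝ, 0 < r → (r:ℝ)^(n-1) ≠ 0 := fun r hr => pow_ne_zero _ (ne_of_gt hr)
    have hWval : ∀ r ∈ Ioi (0:ℝ), W r = g 1 / r^(n-1) := by
      intro r hr
      have hgr := hgconst r hr
      rw [eq_div_iff (hrpow r hr), mul_comm]
      exact hgr
    have hF : ∀ r ∈ Ioi (0:ℝ), HasDerivAt h (g 1 * G r) r := by
      intro r hr
      have hr0 : (0:ℝ) < r := hr
      have H := hhd r hr
      have heq : W r / (φ r)^2 = g 1 * G r := by
        rw [hWval r hr]
        have hsq : (φ r)^2 = r^2 * Real.exp (-r^2) := by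
          simp only [hφdef, mul_pow]
          congr 1
          rw [← Real.exp_nat_mul]
          ring_nf
        rw [hsq]
        have hps : r^(n+1) = r^(n-1) * r^2 := by
          rw [← pow_add]
          congr 1
          omega
        simp only [hGdef]
        rw [Real.exp_neg, hps]
        have he1 : Real.exp (r^2) ≠ 0 := Real.exp_ne_zero _
        field_simp
      rwa [heq] at H
    have hGcont : ContinuousOn G (Ioi (0:ℝ)) := by
      apply ContinuousOn.div
      · exact (Real.continuous_exp.comp (continuous_pow 2)).continuousOn
      · exact (continuous_pow (n+1)).continuousOn
      · exact fun x hx => pow_ne_zero _ (ne_of_gt hx)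
    -- key pointwise lower bound for r ≥ 2
    have key : ∀ r : ℝ, 2 ≤ r →
        |g 1| * Real.exp (r^2/2 - 2*r + 1) / r^n - |h 1| * (r * Real.exp (-r^2/2)) ≤ |ψ r| := by
      intro r hr2
      have hr0 : (0:ℝ) < r := by linarith
      have hr1 : (1:ℝ) ≤ r := by linarith
      have hrm1 : (1:ℝ) ≤ r - 1 := by linarith
      have hIccsub : Icc (1:ℝ) r ⊆ Ioi 0 := fun x hx => lt_of_lt_of_le one_pos hx.1
      have hGint : IntervalIntegrable G volume 1 r := by
        apply ContinuousOn.intervalIntegrable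
        rw [uIcc_of_le hr1]
        exact hGcont.mono hIccsub
      have hGint2 : IntervalIntegrable G volume (r-1) r := by
        apply ContinuousOn.intervalIntegrable
        rw [uIcc_of_le (by linarith : r - 1 ≤ r)]
        exact hGcont.mono (fun x hx => lt_of_lt_of_le one_pos (le_trans hrm1 hx.1))
      set m : ℝ := Real.exp ((r-1)^2) / r^(n+1) with hmdef
      have hIm : m ≤ ∫ s in (1:ℝ)..r, G s := by
        have step1 : (∫ s in (r-1:ℝ)..r, G s) ≤ ∫ s in (1:ℝ)..r, G s := by
          apply intervalIntegral.integral_mono_interval (by linarith) (by linarith) le_rfl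
          · apply MeasureTheory.ae_restrict_of_forall_mem measurableSet_Ioc
            intro x hx
            have hx0 : (0:ℝ) < x := lt_trans one_pos hx.1
            exact div_nonneg (Real.exp_nonneg _) (pow_nonneg hx0.le _)
          · exact hGint
        have step2 : m ≤ ∫ s in (r-1:ℝ)..r, G s := by
          have hconst : (∫ _ in (r-1:ℝ)..r, m) = m := by
            rw [intervalIntegral.integral_const, smul_eq_mul]
            ring_nf
          rw [← hconst]
          apply intervalIntegral.integral_mono_on (by linarith)
            intervalIntegrable_const hGint2
          intro s hs
          have hs1 : (1:ℝ) ≤ s := le_trans hrm1 hs.1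
          have hs0 : (0:ℝ) < s := lt_of_lt_of_le one_pos hs1
          simp only [hmdef, hGdef]
          apply div_le_div₀ (Real.exp_nonneg _)
          · apply Real.exp_le_exp.2
            have : 0 ≤ r - 1 := by linarith
            nlinarith [hs.1]
          · exact pow_pos hs0 _
          · exact pow_le_pow_left₀ hs0.le hs.2 _
        linarith
      have hftc : h r - h 1 = g 1 * ∫ s in (1:ℝ)..r, G s := by
        rw [← intervalIntegral.integral_const_mul]
        symm
        apply intervalIntegral.integral_eq_sub_of_hasDerivAt
        · intro x hx
          rw [uIcc_of_le hr1] at hx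
          exact hF x (hIccsub hx)
        · apply IntervalIntegrable.const_mul hGint
      set I : ℝ := ∫ s in (1:ℝ)..r, G s with hIdef
      have hIm0 : 0 ≤ m := div_nonneg (Real.exp_nonneg _) (pow_nonneg hr0.le _)
      have hI0 : (0:ℝ) ≤ I := le_trans hIm0 hIm
      have habs : |g 1| * I - |h 1| ≤ |h r| := by
        have h1 : |h r - h 1| = |g 1| * I := by
          rw [hftc, abs_mul, abs_of_nonneg hI0]
        have h2 : |h r - h 1| ≤ |h r| + |h 1| := abs_sub _ _
        linarith
      have hmono : |g 1| * m ≤ |g 1| * I :=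
        mul_le_mul_of_nonneg_left hIm (abs_nonneg _)
      have hψabs : |ψ r| = |h r| * φ r := by
        rw [hψeq r hr0, abs_mul, abs_of_pos (hφpos r hr0)]
      have hlow : (|g 1| * m - |h 1|) * φ r ≤ |ψ r| := by
        rw [hψabs]
        apply mul_le_mul_of_nonneg_right _ (hφpos r hr0).le
        linarith
      have hmφ : m * φ r = Real.exp (r^2/2 - 2*r + 1) / r^n := by
        have hexp : Real.exp ((r-1)^2) * Real.exp (-r^2/2) = Real.exp (r^2/2 - 2*r + 1) := by
          rw [← Real.exp_add]
          congr 1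
          ring
        have hps : r^(n+1) = r^n * r := pow_succ r n
        have hrn : (r:ℝ)^n ≠ 0 := pow_ne_zero _ (ne_of_gt hr0)
        simp only [hmdef, hφdef]
        rw [hps, ← hexp]
        field_simp
      calc |g 1| * Real.exp (r^2/2 - 2*r + 1) / r^n - |h 1| * (r * Real.exp (-r^2/2))
          = (|g 1| * m - |h 1|) * φ r := by
            have hrw : (|g 1| * m - |h 1|) * φ r = |g 1| * (m * φ r) - |h 1| * φ r := by ring
            rw [hrw, hmφ]
            simp only [hφdef]
            ring
        _ ≤ |ψ r| := hlow
    -- the lower bound tends to infinity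
    have htend : Tendsto (fun r : ℝ =>
        |g 1| * Real.exp (r^2/2 - 2*r + 1) / r^n - |h 1| * (r * Real.exp (-r^2/2)))
        atTop atTop := by
      have hT1 : Tendsto (fun r : ℝ => |g 1| * Real.exp (r^2/2 - 2*r + 1) / r^n) atTop atTop := by
        have hbase : Tendsto (fun r : ℝ => Real.exp (r^2/2 - 2*r + 1) / r^n) atTop atTop := by
          apply tendsto_atTop_mono' atTop (_ : ∀ᶠ r in atTop, Real.exp r / r^n ≤ _)
            (Real.tendsto_exp_div_pow_atTop n)
          filter_upwards [eventually_ge_atTop (6:ℝ)] with r hr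
          have hr0 : (0:ℝ) < r := by linarith
          exact div_le_div₀ (Real.exp_nonneg _)
            (Real.exp_le_exp.2 (by nlinarith [mul_nonneg (by linarith : (0:ℝ) ≤ r - 6) (by linarith : (0:ℝ) ≤ r)]))
            (pow_pos hr0 n) le_rfl
        have := hbase.const_mul_atTop (abs_pos.2 hc0)
        simpa [mul_div_assoc] using this
      have hT2 : Tendsto (fun r : ℝ => -(|h 1| * (r * Real.exp (-r^2/2)))) atTop (nhds 0) := by
        have hsq : Tendsto (fun r : ℝ => r * Real.exp (-r^2/2)) atTop (nhds 0) := by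
          apply squeeze_zero' (g := fun r => r * Real.exp (-r))
          · filter_upwards [eventually_ge_atTop (0:ℝ)] with r hr
            positivity
          · filter_upwards [eventually_ge_atTop (2:ℝ)] with r hr
            apply mul_le_mul_of_nonneg_left _ (by linarith)
            apply Real.exp_le_exp.2
            nlinarith
          · have := tendsto_pow_mul_exp_neg_atTop_nhds_zero 1
            simpa using this
        have := (hsq.const_mul (|h 1|)).neg
        simpa using this
      have := hT2.add_atTop hT1
      apply this.congr
      intro r
      ring
    obtain ⟨R, hR⟩ := (tendsto_atTop_atTop.1 htend) 1
    set R' : ℝ := max R 2 with hR'def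
    have hψbig : ∀ r : ℝ, R' ≤ r → 1 ≤ ψ r ^ 2 := by
      intro r hr
      have h1 : 1 ≤ |ψ r| :=
        le_trans (hR r (le_trans (le_max_left _ _) hr)) (key r (le_trans (le_max_right _ _) hr))
      nlinarith [abs_nonneg (ψ r), sq_abs (ψ r)]
    have hR'pos : (0:ℝ) < R' := lt_of_lt_of_le two_pos (le_max_right _ _)
    have hint' : IntegrableOn (fun r => ψ r ^ 2 + ψ' r ^ 2) (Ioi R') :=
      hint.mono_set (Ioi_subset_Ioi hR'pos.le)
    have h1int : IntegrableOn (fun _ : ℝ => (1:ℝ)) (Ioi R') := by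
      apply Integrable.mono' hint' aestronglyMeasurable_const
      apply MeasureTheory.ae_restrict_of_forall_mem measurableSet_Ioi
      intro x hx
      have := hψbig x (le_of_lt hx)
      have := sq_nonneg (ψ' x)
      simp only [norm_one]
      linarith
    rw [integrableOn_const_iff] at h1int
    simp [Real.volume_Ioi] at h1int
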